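/- (Corollary 2, corrected labeling.) In the extended bidirectional structural model with direct instrument effect δ of W on X° and η = 0, under Assumption 1 (confounders independent with equal variance σ² > 0), suppose βxy·βyx ≠ 1, βxy ≠ 0, μxz ≠ 0, μyw ≠ 0 and βxy·δ + μyw ≠ 0. Define c = 1/(1 − βxy·βyx), λ1 = σ²c²(1 + βyx²), λ2 = σ²c²(1 + βxy²), ξxz = c·μxz/√λ1, ξxw = c(δ + βyx·μyw)/√λ1, ξyz = c·βxy·μxz/√λ2, ξyw = c(βxy·δ + μyw)/√λ2, δ0 = δ/μyw, t1 = ξxw/ξxz, t2 = ξyz/ξyw, t3 = ξxz/ξyz, t4 = ξxw/ξyw, s4 = t3t4 + t3t4·δ0²(t1t2 − 1)² − t1t2, s5 = 2t1t2t3t4·δ0(t1t2 − 1), s6 = t1t2(t1t2t3t4 − 1). Then: (i) s4·βxy² + s5·βxy + s6 = 0; (ii) βxy has the same sign as t3; and (iii) βyx = δ0(t1t2 − 1) + t1t2/βxy. -/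

import Mathlib

set_option maxHeartbeats 1000000


/-- Corollary 2: sensitivity analysis when the instrument `W`
has a direct effect `δ` on `X°` and `Z` is valid (`η = 0`), under Assumption 1. -/
theorem stmt_15 (μx0 μy0 μxz μyw δ βxy βyx σ : ℝ)
    (hσ : 0 < σ) (hβ : βxy * βyx ≠ 1) (hβxy : βxy ≠ 0)
    (hμxz : μxz ≠ 0) (hμyw : μyw ≠ 0)
    (hyw : βxy * δ + μyw ≠ 0)
    (c lam1 lam2 ξxz ξxw ξyz ξyw δ0 t1 t2 t3 t4 s4 s5 s6 : ℝ)
    (hc : c = 1 / (1 - βxy * βyx))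
    (hlam1 : lam1 = σ ^ 2 * c ^ 2 * (1 + βyx ^ 2))
    (hlam2 : lam2 = σ ^ 2 * c ^ 2 * (1 + βxy ^ 2))
    (hξxz : ξxz = c * μxz / Real.sqrt lam1)
    (hξxw : ξxw = c * (δ + βyx * μyw) / Real.sqrt lam1)
    (hξyz : ξyz = c * βxy * μxz / Real.sqrt lam2)
    (hξyw : ξyw = c * (βxy * δ + μyw) / Real.sqrt lam2)
    (hδ0 : δ0 = δ / μyw)
    (ht1 : t1 = ξxw / ξxz) (ht2 : t2 = ξyz / ξyw)
    (ht3 : t3 = ξxz / ξyz) (ht4 : t4 = ξxw / ξyw)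
    (hs4 : s4 = t3 * t4 + t3 * t4 * δ0 ^ 2 * (t1 * t2 - 1) ^ 2 - t1 * t2)
    (hs5 : s5 = 2 * t1 * t2 * t3 * t4 * δ0 * (t1 * t2 - 1))
    (hs6 : s6 = t1 * t2 * (t1 * t2 * t3 * t4 - 1)) :
    s4 * βxy ^ 2 + s5 * βxy + s6 = 0 ∧
    Real.sign βxy = Real.sign t3 ∧
    βyx = δ0 * (t1 * t2 - 1) + t1 * t2 / βxy := by
  have h1 : (1 : ℝ) - βxy * βyx ≠ 0 := sub_ne_zero.mpr (Ne.symm hβ)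
  have hc0 : c ≠ 0 := by rw [hc]; exact one_div_ne_zero h1
  have hσ0 : σ ≠ 0 := ne_of_gt hσ
  have hl1 : 0 < lam1 := by
    rw [hlam1]; positivity
  have hl2 : 0 < lam2 := by
    rw [hlam2]; positivity
  set a := Real.sqrt lam1 with ha_def
  set b := Real.sqrt lam2 with hb_def
  have ha : 0 < a := Real.sqrt_pos.mpr hl1
  have hb : 0 < b := Real.sqrt_pos.mpr hl2
  have ha2 : a ^ 2 = lam1 := Real.sq_sqrt hl1.le
  have hb2 : b ^ 2 = lam2 := Real.sq_sqrt hl2.le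
  have ha0 : a ≠ 0 := ne_of_gt ha
  have hb0 : b ≠ 0 := ne_of_gt hb
  have h12 : t1 * t2 = βxy * (δ + βyx * μyw) / (βxy * δ + μyw) := by
    rw [ht1, ht2, hξxw, hξxz, hξyz, hξyw]
    field_simp
  have h34 : t3 * t4 = lam2 * (δ + βyx * μyw) / (βxy * lam1 * (βxy * δ + μyw)) := by
    rw [ht3, ht4, hξxw, hξxz, hξyz, hξyw, ← ha2, ← hb2]
    field_simp
  have h34' : t3 * t4 = (1 + βxy ^ 2) * (δ + βyx * μyw) /
      (βxy * (1 + βyx ^ 2) * (βxy * δ + μyw)) := by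
    rw [h34, hlam1, hlam2]
    have h1b : (1 : ℝ) + βyx ^ 2 ≠ 0 := by positivity
    field_simp
  have hu : δ0 * (t1 * t2 - 1) * βxy + t1 * t2 = βyx * βxy := by
    rw [h12, hδ0]
    have hyw' : δ * βxy + μyw ≠ 0 := by rw [mul_comm]; exact hyw
    field_simp
    ring
  have hkey : t3 * t4 * βxy ^ 2 * (1 + βyx ^ 2) = t1 * t2 * (1 + βxy ^ 2) := by
    rw [h12, h34']
    have h1b : (1 : ℝ) + βyx ^ 2 ≠ 0 := by positivity
    field_simp
  refine ⟨?_, ?_, ?_⟩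
  · rw [hs4, hs5, hs6]
    linear_combination (t3 * t4 * (δ0 * (t1 * t2 - 1) * βxy + t1 * t2 + βyx * βxy)) * hu + hkey
  · have ht3' : t3 = b / (βxy * a) := by
      rw [ht3, hξxz, hξyz]
      field_simp
    rcases lt_or_gt_of_ne hβxy with hneg | hpos
    · have : t3 < 0 := by
        rw [ht3']
        apply div_neg_of_pos_of_neg hb
        exact mul_neg_of_neg_of_pos hneg ha
      rw [Real.sign_of_neg hneg, Real.sign_of_neg this]
    · have : 0 < t3 := by
        rw [ht3']
        exact div_pos hb (mul_pos hpos ha)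
      rw [Real.sign_of_pos hpos, Real.sign_of_pos this]
  · have h' : t1 * t2 / βxy = βyx - δ0 * (t1 * t2 - 1) := by
      rw [div_eq_iff hβxy]
      linear_combination hu
    rw [h']
    ring
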